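/- arXiv:2502.16639 — 2 statements merged into one kernel-verified Lean document; each statement's English description precedes it below -/
import Mathlib

section
/- The function g : (1,∞) → ℝ defined by g(x) = ( (2^{2+x}−1)·ζ(x+2) ) / ( (2^{4+x}−1)·(2+x)·(3+x)·ζ(x+4) ) is strictly decreasing; in particular, there exists no pair (n,m) with n > m > 1 such that g(n) = g(m). -/
open Real Filter

set_option maxHeartbeats 1000000

/-- The Riemann zeta function `ζ(s) = Σ_{j=1}^∞ j^{-s}` for real `s > 1`. -/
noncomputable def rzeta (s : ℝ) : ℝ := ∑' j : ℕ, ((j : ℝ) + 1) ^ (-s)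

/-- The auxiliary function `g(x) = ((2^{2+x}−1)·ζ(x+2)) / ((2^{4+x}−1)·(2+x)·(3+x)·ζ(x+4))`
appearing in the proof of the absence of a tricritical point. -/
noncomputable def g (x : ℝ) : ℝ :=
  ((2 ^ (2 + x) - 1) * rzeta (x + 2)) /
    ((2 ^ (4 + x) - 1) * (2 + x) * (3 + x) * rzeta (x + 4))

/-- The odd zeta function (Dirichlet lambda). -/
noncomputable def lam (s : ℝ) : ℝ := ∑' k : ℕ, (2 * (k : ℝ) + 1) ^ (-s)

lemma summable_rzeta {s : ℝ} (hs : 1 < s) :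
    Summable (fun j : ℕ => ((j : ℝ) + 1) ^ (-s)) := by
  have h : Summable (fun n : ℕ => (n : ℝ) ^ (-s)) :=
    Real.summable_nat_rpow.mpr (by linarith)
  have := (summable_nat_add_iff 1).mpr h
  refine this.congr fun j => ?_
  push_cast
  ring_nf

lemma summable_lam {s : ℝ} (hs : 1 < s) :
    Summable (fun k : ℕ => (2 * (k : ℝ) + 1) ^ (-s)) := by
  refine Summable.of_nonneg_of_le (fun k => ?_) (fun k => ?_) (summable_rzeta hs)
  · positivity
  · have hk : (0 : ℝ) ≤ (k : ℝ) := Nat.cast_nonneg k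
    exact Real.rpow_le_rpow_of_nonpos (by positivity) (by linarith) (by linarith)

lemma lam_pos {s : ℝ} (hs : 1 < s) : 0 < lam s := by
  refine Summable.tsum_pos (summable_lam hs) (fun k => by positivity) 0 ?_
  norm_num

lemma rzeta_pos {s : ℝ} (hs : 1 < s) : 0 < rzeta s := by
  refine Summable.tsum_pos (summable_rzeta hs) (fun k => by positivity) 0 ?_
  norm_num

lemma rzeta_eq_lam {s : ℝ} (hs : 1 < s) :
    ((2 : ℝ) ^ s - 1) * rzeta s = 2 ^ s * lam s := by
  have hodd_eq : ∀ k : ℕ, (((2 * k + 1 : ℕ) : ℝ) + 1) ^ (-s)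
      = 2 ^ (-s) * (((k : ℝ) + 1) ^ (-s)) := by
    intro k
    push_cast
    rw [show (2 : ℝ) * k + 1 + 1 = 2 * ((k : ℝ) + 1) by ring,
      Real.mul_rpow (by norm_num) (by positivity)]
  have heven_eq : ∀ k : ℕ, (((2 * k : ℕ) : ℝ) + 1) ^ (-s) = (2 * (k : ℝ) + 1) ^ (-s) := by
    intro k; push_cast; ring_nf
  have heven : Summable (fun k : ℕ => (((2 * k : ℕ) : ℝ) + 1) ^ (-s)) :=
    (summable_lam hs).congr fun k => (heven_eq k).symm
  have hodd : Summable (fun k : ℕ => (((2 * k + 1 : ℕ) : ℝ) + 1) ^ (-s)) :=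
    ((summable_rzeta hs).mul_left ((2:ℝ) ^ (-s))).congr fun k => (hodd_eq k).symm
  have key := tsum_even_add_odd (f := fun j : ℕ => ((j : ℝ) + 1) ^ (-s)) heven hodd
  have e1 : ∑' k : ℕ, (((2 * k : ℕ) : ℝ) + 1) ^ (-s) = lam s := by
    rw [lam]; exact tsum_congr heven_eq
  have e2 : ∑' k : ℕ, (((2 * k + 1 : ℕ) : ℝ) + 1) ^ (-s) = 2 ^ (-s) * rzeta s := by
    rw [rzeta, ← tsum_mul_left]; exact tsum_congr hodd_eq
  have key2 : lam s + 2 ^ (-s) * rzeta s = rzeta s := by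
    rw [← e1, ← e2, rzeta]; exact key
  have h2' : (2 : ℝ) ^ (-s) * 2 ^ s = 1 := by
    rw [← Real.rpow_add (by norm_num)]; simp
  linear_combination (-(2:ℝ) ^ s) * key2 + rzeta s * h2'

lemma g_eq {x : ℝ} (hx : 1 < x) :
    g x = lam (x + 2) / (4 * lam (x + 4) * ((2 + x) * (3 + x))) := by
  have h2 : (1 : ℝ) < x + 2 := by linarith
  have h4 : (1 : ℝ) < x + 4 := by linarith
  have e2 := rzeta_eq_lam h2
  have e4 := rzeta_eq_lam h4
  have hA1 : (1 : ℝ) < 2 ^ (x + 2) :=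
    (Real.one_lt_rpow_iff_of_pos (by norm_num)).mpr (Or.inl ⟨by norm_num, by linarith⟩)
  have hB1 : (1 : ℝ) < 2 ^ (x + 4) :=
    (Real.one_lt_rpow_iff_of_pos (by norm_num)).mpr (Or.inl ⟨by norm_num, by linarith⟩)
  have h22 : (2 : ℝ) ^ (2 : ℝ) = 4 := by
    rw [show (2:ℝ) = ((2:ℕ):ℝ) from by norm_num, Real.rpow_natCast]; norm_num
  have hB4A : (2 : ℝ) ^ (x + 4) = 4 * 2 ^ (x + 2) := by
    rw [show x + 4 = (x + 2) + 2 by ring, Real.rpow_add (by norm_num), h22]; ring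
  have hl2 := lam_pos h2
  have hl4 := lam_pos h4
  have hz4 := rzeta_pos h4
  have e2' : ((2:ℝ) ^ (2 + x) - 1) * rzeta (x + 2) = 2 ^ (2 + x) * lam (x + 2) := by
    rw [show (2 : ℝ) + x = x + 2 by ring]; exact e2
  have e4' : ((2:ℝ) ^ (4 + x) - 1) * rzeta (x + 4) = 2 ^ (4 + x) * lam (x + 4) := by
    rw [show (4 : ℝ) + x = x + 4 by ring]; exact e4
  have hA1' : (1 : ℝ) < 2 ^ (2 + x) := by rw [show (2 : ℝ) + x = x + 2 by ring]; exact hA1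
  have hB1' : (1 : ℝ) < 2 ^ (4 + x) := by rw [show (4 : ℝ) + x = x + 4 by ring]; exact hB1
  have hB4A' : (2 : ℝ) ^ (4 + x) = 4 * 2 ^ (2 + x) := by
    rw [show (2 : ℝ) + x = x + 2 by ring, show (4 : ℝ) + x = x + 4 by ring]; exact hB4A
  rw [g]
  rw [div_eq_div_iff
    (ne_of_gt (mul_pos (mul_pos (mul_pos (by linarith) (by linarith)) (by linarith)) hz4))
    (ne_of_gt (by positivity : (0:ℝ) < 4 * lam (x + 4) * ((2 + x) * (3 + x))))]
  linear_combination (4 * lam (x + 4) * ((2 + x) * (3 + x))) * e2'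
    - (lam (x + 2) * ((2 + x) * (3 + x))) * e4'
    - (lam (x + 2) * lam (x + 4) * ((2 + x) * (3 + x))) * hB4A'

/-- The key log-convexity inequality. -/
lemma lam_key {x y : ℝ} (hx : 1 < x) (hxy : x < y) :
    lam (y + 2) * lam (x + 4) ≤ lam (x + 2) * lam (y + 4) := by
  set u : ℕ → ℝ := fun k => 2 * (k : ℝ) + 1 with hu
  have hupos : ∀ k, (0 : ℝ) < u k := fun k => by positivity
  have hsum : ∀ s : ℝ, 1 < s → Summable (fun k => u k ^ (-s)) := fun s hs => summable_lam hs
  have hnn : ∀ (s : ℝ) (k : ℕ), 0 ≤ u k ^ (-s) := fun s k => by positivity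
  have prodsum : ∀ a b : ℝ, 1 < a → 1 < b →
      Summable (fun p : ℕ × ℕ => u p.1 ^ (-a) * u p.2 ^ (-b)) ∧
      (∑' p : ℕ × ℕ, u p.1 ^ (-a) * u p.2 ^ (-b)) = lam a * lam b := by
    intro a b ha hb
    have hS : Summable (fun p : ℕ × ℕ => u p.1 ^ (-a) * u p.2 ^ (-b)) :=
      (hsum a ha).mul_of_nonneg (hsum b hb) (fun k => hnn a k) (fun k => hnn b k)
    refine ⟨hS, ?_⟩
    rw [Summable.tsum_prod hS]
    simp only [tsum_mul_left, tsum_mul_right]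
    rfl
  have h2 : (1:ℝ) < x + 2 := by linarith
  have h4 : (1:ℝ) < x + 4 := by linarith
  have h2' : (1:ℝ) < y + 2 := by linarith
  have h4' : (1:ℝ) < y + 4 := by linarith
  obtain ⟨S1, E1⟩ := prodsum (x+2) (y+4) h2 h4'
  obtain ⟨S2, E2⟩ := prodsum (y+4) (x+2) h4' h2
  obtain ⟨S3, E3⟩ := prodsum (y+2) (x+4) h2' h4
  obtain ⟨S4, E4⟩ := prodsum (x+4) (y+2) h4 h2'
  have pointwise : ∀ p : ℕ × ℕ,
      u p.1 ^ (-(y+2)) * u p.2 ^ (-(x+4)) + u p.1 ^ (-(x+4)) * u p.2 ^ (-(y+2)) ≤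
      u p.1 ^ (-(x+2)) * u p.2 ^ (-(y+4)) + u p.1 ^ (-(y+4)) * u p.2 ^ (-(x+2)) := by
    intro p
    have hap : 0 < u p.1 := hupos p.1
    have hbp : 0 < u p.2 := hupos p.2
    set a := u p.1
    set b := u p.2
    have ea2 : a ^ (-(y+2)) = a ^ (-(x+2)) * a ^ (-(y - x)) := by
      rw [← Real.rpow_add hap]; ring_nf
    have ea4 : a ^ (-(x+4)) = a ^ (-(x+2)) * a ^ (-(2:ℝ)) := by
      rw [← Real.rpow_add hap]; ring_nf
    have ea6 : a ^ (-(y+4)) = a ^ (-(x+2)) * a ^ (-(y - x)) * a ^ (-(2:ℝ)) := by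
      rw [← Real.rpow_add hap, ← Real.rpow_add hap]; ring_nf
    have eb2 : b ^ (-(y+2)) = b ^ (-(x+2)) * b ^ (-(y - x)) := by
      rw [← Real.rpow_add hbp]; ring_nf
    have eb4 : b ^ (-(x+4)) = b ^ (-(x+2)) * b ^ (-(2:ℝ)) := by
      rw [← Real.rpow_add hbp]; ring_nf
    have eb6 : b ^ (-(y+4)) = b ^ (-(x+2)) * b ^ (-(y - x)) * b ^ (-(2:ℝ)) := by
      rw [← Real.rpow_add hbp, ← Real.rpow_add hbp]; ring_nf
    rw [ea2, ea4, ea6, eb2, eb4, eb6]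
    set A := a ^ (-(x+2)) with hA
    set B := b ^ (-(x+2)) with hB
    set S := a ^ (-(y - x)) with hS
    set S' := b ^ (-(y - x)) with hS'
    set T := a ^ (-(2:ℝ)) with hT
    set T' := b ^ (-(2:ℝ)) with hT'
    have hApos : 0 < A := by rw [hA]; positivity
    have hBpos : 0 < B := by rw [hB]; positivity
    have key : 0 ≤ (S - S') * (T - T') := by
      rcases le_total a b with h | h
      · have h1 : S' ≤ S := Real.rpow_le_rpow_of_nonpos hap h (by linarith)
        have h2 : T' ≤ T := Real.rpow_le_rpow_of_nonpos hap h (by norm_num)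
        exact mul_nonneg (by linarith) (by linarith)
      · have h1 : S ≤ S' := Real.rpow_le_rpow_of_nonpos hbp h (by linarith)
        have h2 : T ≤ T' := Real.rpow_le_rpow_of_nonpos hbp h (by norm_num)
        nlinarith
    nlinarith [mul_nonneg (mul_pos hApos hBpos).le key]
  have tsum_le := Summable.tsum_le_tsum pointwise (S3.add S4) (S1.add S2)
  rw [Summable.tsum_add S3 S4, Summable.tsum_add S1 S2, E1, E2, E3, E4] at tsum_le
  linarith

/-- The function `g` is strictly decreasing on `(1,∞)`; in particular there is
no pair `(n,m)` with `n > m > 1` such that `g(n) = g(m)`. -/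
theorem g_strictAntiOn_and_injective :
    StrictAntiOn g (Set.Ioi (1 : ℝ)) ∧
    ¬ ∃ n m : ℝ, 1 < m ∧ m < n ∧ g n = g m := by
  have anti : StrictAntiOn g (Set.Ioi (1 : ℝ)) := by
    intro x hx y hy hxy
    simp only [Set.mem_Ioi] at hx hy
    rw [g_eq hx, g_eq hy]
    have h2 : (1:ℝ) < x + 2 := by linarith
    have h4 : (1:ℝ) < x + 4 := by linarith
    have h2' : (1:ℝ) < y + 2 := by linarith
    have h4' : (1:ℝ) < y + 4 := by linarith
    have l2 := lam_pos h2
    have l4 := lam_pos h4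
    have l2' := lam_pos h2'
    have l4' := lam_pos h4'
    have key := lam_key hx hxy
    have dx : (0:ℝ) < 4 * lam (x + 4) * ((2 + x) * (3 + x)) := by positivity
    have dy : (0:ℝ) < 4 * lam (y + 4) * ((2 + y) * (3 + y)) := by positivity
    rw [div_lt_div_iff₀ dy dx]
    have hpoly : (2 + x) * (3 + x) < (2 + y) * (3 + y) := by nlinarith
    have hpolyp : (0:ℝ) < (2 + x) * (3 + x) := by nlinarith
    have step1 : lam (y+2) * lam (x+4) * ((2 + x) * (3 + x)) ≤
        lam (x+2) * lam (y+4) * ((2 + x) * (3 + x)) :=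
      mul_le_mul_of_nonneg_right key hpolyp.le
    have step2 : lam (x+2) * lam (y+4) * ((2 + x) * (3 + x)) <
        lam (x+2) * lam (y+4) * ((2 + y) * (3 + y)) := by
      have := mul_lt_mul_of_pos_left hpoly (mul_pos l2 l4')
      nlinarith
    nlinarith [step1, step2]
  refine ⟨anti, ?_⟩
  rintro ⟨n, m, h1, h2, h3⟩
  have hm : m ∈ Set.Ioi (1:ℝ) := h1
  have hn : n ∈ Set.Ioi (1:ℝ) := by simp only [Set.mem_Ioi]; linarith
  exact absurd h3 (ne_of_lt (anti hm hn h2))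
end

section
/- Let n > m > 1 be real and let η > 0. Suppose A* : (1, 1+η) → (0,∞) is such that, setting δ*(σ) = σ/(2A*(σ)), one has δ*(σ) ∈ (0, 1/2) for all σ, δ*(σ) → 0 as σ → 1⁺, and for every σ ∈ (1, 1+η) the equation (A*(σ))^{m−n} = 2^{n−m}·[ ζ(m+1, 1−δ*(σ)) − ζ(m+1, δ*(σ)) ] / [ ζ(n+1, 1−δ*(σ)) − ζ(n+1, δ*(σ)) ] holds. Then lim_{σ→1⁺} A*(σ)·(σ−1)^{1/(m+2)} = (1/2)·( 2(m+1)·ζ(m+2)/(n−m) )^{1/(m+2)}; in particular A*(σ) diverges as σ → 1⁺ with the non-universal critical exponent 1/(m+2). -/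
open Real Filter
open Topology Set

/-- The Hurwitz zeta function `ζ(s,q) = Σ_{j=0}^∞ (j+q)^{-s}` for real `s > 1`, `q > 0`. -/
noncomputable def hzeta (s q : ℝ) : ℝ := ∑' j : ℕ, ((j : ℝ) + q) ^ (-s)

lemma mySummable (p : ℝ) (hp : 1 < p) : Summable (fun j : ℕ => ((j:ℝ)+1)^(-p)) := by
  have h0 : Summable (fun n : ℕ => (n:ℝ) ^ (-p)) := Real.summable_nat_rpow.mpr (by linarith)
  have h1 := (summable_nat_add_iff 1).mpr h0
  exact h1.congr (fun j => by push_cast; ring_nf)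

lemma summable_hz {s q : ℝ} (hs : 1 < s) (hq : 0 < q) :
    Summable (fun j : ℕ => ((j:ℝ)+q)^(-s)) := by
  apply (summable_nat_add_iff 1).mp
  apply Summable.of_nonneg_of_le (f := fun j : ℕ => ((j:ℝ)+1)^(-s))
    (fun j => Real.rpow_nonneg (by positivity) _) (fun j => ?_) (mySummable s hs)
  exact Real.rpow_le_rpow_of_nonpos (by positivity) (by push_cast; linarith) (by linarith)

lemma slope_limit (s a : ℝ) (ha : 0 < a) :
    Tendsto (fun δ : ℝ => ((a-δ)^(-s) - (a+δ)^(-s))/δ) (𝓝[>] (0:ℝ))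
      (𝓝 (2*s*a^(-(s+1)))) := by
  have outer : HasDerivAt (fun x : ℝ => x ^ (-s)) ((-s) * a ^ (-s-1)) a :=
    Real.hasDerivAt_rpow_const (Or.inl (ne_of_gt ha))
  have inner1 : HasDerivAt (fun δ : ℝ => a - δ) (-1) 0 := (hasDerivAt_id 0).const_sub a
  have inner2 : HasDerivAt (fun δ : ℝ => a + δ) 1 0 := (hasDerivAt_id 0).const_add a
  have h1 : HasDerivAt (fun δ : ℝ => (a-δ)^(-s)) (((-s) * a ^ (-s-1)) * (-1)) 0 := by
    have : HasDerivAt (fun x : ℝ => x ^ (-s)) ((-s) * a ^ (-s-1)) ((fun δ : ℝ => a - δ) 0) := by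
      simpa using outer
    exact this.comp 0 inner1
  have h2 : HasDerivAt (fun δ : ℝ => (a+δ)^(-s)) (((-s) * a ^ (-s-1)) * 1) 0 := by
    have : HasDerivAt (fun x : ℝ => x ^ (-s)) ((-s) * a ^ (-s-1)) ((fun δ : ℝ => a + δ) 0) := by
      simpa using outer
    exact this.comp 0 inner2
  have h := h1.sub h2
  rw [hasDerivAt_iff_tendsto_slope] at h
  have hsub : (𝓝[>] (0:ℝ)) ≤ (𝓝[≠] (0:ℝ)) :=
    nhdsWithin_mono 0 (fun x hx => ne_of_gt hx)
  have h' := h.mono_left hsub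
  have heq : ∀ δ : ℝ, slope (fun δ : ℝ => (a-δ)^(-s) - (a+δ)^(-s)) 0 δ
      = ((a-δ)^(-s) - (a+δ)^(-s))/δ := by
    intro δ
    simp [slope_def_field]
  have h'' := h'.congr heq
  convert h'' using 2
  rw [show -(s+1) = -s-1 by ring]
  ring

lemma diff_bound {s a δ : ℝ} (hs : 0 < s) (ha : 1 ≤ a) (hδ0 : 0 < δ) (hδ : δ ≤ 1/4) :
    (a-δ)^(-s) - (a+δ)^(-s) ≤ 2*δ*s*(a-δ)^(-s-1) := by
  have had : (0:ℝ) < a - δ := by linarith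
  obtain ⟨c, hc, hderiv⟩ := exists_hasDerivAt_eq_slope (fun x : ℝ => x^(-s))
    (fun x : ℝ => (-s) * x^(-s-1)) (show a - δ < a + δ by linarith)
    (fun x hx => (Real.continuousAt_rpow_const x (-s)
      (Or.inl (ne_of_gt (lt_of_lt_of_le had hx.1)))).continuousWithinAt)
    (fun x hx => Real.hasDerivAt_rpow_const (Or.inl (ne_of_gt (had.trans hx.1))))
  have hc0 : (0:ℝ) < c := had.trans hc.1
  have key : (a-δ)^(-s) - (a+δ)^(-s) = 2*δ*(s * c^(-s-1)) := by
    have h2δ : a + δ - (a - δ) = 2*δ := by ring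
    rw [h2δ] at hderiv
    have : (-s) * c^(-s-1) * (2*δ) = (a+δ)^(-s) - (a-δ)^(-s) := by
      field_simp at hderiv ⊢
      linarith [hderiv]
    linarith [this]
  rw [key]
  have hle : c^(-s-1) ≤ (a-δ)^(-s-1) :=
    Real.rpow_le_rpow_of_nonpos had (le_of_lt hc.1) (by linarith)
  have : s * c^(-s-1) ≤ s * (a-δ)^(-s-1) := by nlinarith
  nlinarith

noncomputable def Gs (s δ : ℝ) : ℝ := ∑' j : ℕ, (((j:ℝ)+1-δ)^(-s) - ((j:ℝ)+1+δ)^(-s))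

lemma summable_G1 {s δ : ℝ} (hs : 1 < s) (hδ : δ < 1) :
    Summable (fun j : ℕ => ((j:ℝ)+1-δ)^(-s)) :=
  (summable_hz hs (show (0:ℝ) < 1-δ by linarith)).congr (fun j => by ring_nf)

lemma summable_G2 {s δ : ℝ} (hs : 1 < s) (hδ : -1 < δ) :
    Summable (fun j : ℕ => ((j:ℝ)+1+δ)^(-s)) :=
  (summable_hz hs (show (0:ℝ) < 1+δ by linarith)).congr (fun j => by ring_nf)

lemma hz_sub {s δ : ℝ} (hs : 1 < s) (hδ0 : 0 < δ) (hδ : δ < 1/2) :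
    hzeta s (1-δ) - hzeta s δ = Gs s δ - δ^(-s) := by
  have s2 : Summable (fun j : ℕ => ((j:ℝ)+δ)^(-s)) := summable_hz hs hδ0
  have s1 : Summable (fun j : ℕ => ((j:ℝ)+1-δ)^(-s)) := summable_G1 hs (by linarith)
  have s3 : Summable (fun j : ℕ => ((j:ℝ)+1+δ)^(-s)) := summable_G2 hs (by linarith)
  have h2 : hzeta s δ = δ^(-s) + ∑' j : ℕ, ((j:ℝ)+1+δ)^(-s) := by
    rw [hzeta, Summable.tsum_eq_zero_add s2]
    congr 1
    · norm_num
    · exact tsum_congr fun j => by push_cast; ring_nf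
  have h1 : hzeta s (1-δ) = ∑' j : ℕ, ((j:ℝ)+1-δ)^(-s) := by
    rw [hzeta]; congr 1; ext j; ring_nf
  rw [h1, h2, Gs, Summable.tsum_sub s1 s3]
  ring

lemma hz_lt {s δ : ℝ} (hs : 1 < s) (hδ0 : 0 < δ) (hδ : δ < 1/2) :
    hzeta s (1-δ) < hzeta s δ := by
  have s2 : Summable (fun j : ℕ => ((j:ℝ)+δ)^(-s)) := summable_hz hs hδ0
  have s1 : Summable (fun j : ℕ => ((j:ℝ)+(1-δ))^(-s)) :=
    summable_hz hs (show (0:ℝ) < 1-δ by linarith)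
  rw [hzeta, hzeta]
  refine Summable.tsum_lt_tsum_of_nonneg (i := 0)
    (fun j => Real.rpow_nonneg (by have : (0:ℝ) ≤ j := j.cast_nonneg; linarith) _)
    (fun j => Real.rpow_le_rpow_of_nonpos
      (by have : (0:ℝ) ≤ j := j.cast_nonneg; linarith)
      (by have : (0:ℝ) ≤ j := j.cast_nonneg; linarith) (by linarith)) ?_ s2
  push_cast
  rw [zero_add, zero_add]
  exact Real.rpow_lt_rpow_of_neg (by linarith) (by linarith) (by linarith)

lemma G_asymp {s : ℝ} (hs : 1 < s) :
    Tendsto (fun δ : ℝ => Gs s δ / δ) (𝓝[>](0:ℝ)) (𝓝 (2*s*rzeta (s+1))) := by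
  have hs0 : 0 < s := by linarith
  have hbsum : Summable (fun j : ℕ => 2*s*(3/4:ℝ)^(-s-1) * ((j:ℝ)+1)^(-(s+1))) :=
    (mySummable (s+1) (by linarith)).mul_left _
  have key : Tendsto (fun δ : ℝ => ∑' j : ℕ,
      ((((j:ℝ)+1-δ)^(-s) - ((j:ℝ)+1+δ)^(-s))/δ)) (𝓝[>](0:ℝ))
      (𝓝 (∑' j : ℕ, 2*s*((j:ℝ)+1)^(-(s+1)))) := by
    refine tendsto_tsum_of_dominated_convergence hbsum (fun k => slope_limit s ((k:ℝ)+1) (by positivity)) ?_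
    filter_upwards [Ioo_mem_nhdsGT_of_mem (show (0:ℝ) ∈ Ico 0 (1/4) by norm_num)] with δ hδ k
    obtain ⟨hδ0, hδ4⟩ := hδ
    set a : ℝ := (k:ℝ)+1 with ha
    have ha1 : 1 ≤ a := by have : (0:ℝ) ≤ k := k.cast_nonneg; simp only [ha]; linarith
    have had : (0:ℝ) < a - δ := by linarith
    have hnonneg : 0 ≤ (a-δ)^(-s) - (a+δ)^(-s) := by
      have := Real.rpow_le_rpow_of_nonpos had (show a - δ ≤ a + δ by linarith) (show -s ≤ 0 by linarith)
      linarith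
    rw [Real.norm_eq_abs, abs_div, abs_of_nonneg hnonneg, abs_of_pos hδ0,
      div_le_iff₀ hδ0]
    have h1 : (a-δ)^(-s) - (a+δ)^(-s) ≤ 2*δ*s*(a-δ)^(-s-1) :=
      diff_bound hs0 ha1 hδ0 (le_of_lt hδ4)
    have h2 : (a-δ)^(-s-1) ≤ ((3/4)*a)^(-s-1) := by
      refine Real.rpow_le_rpow_of_nonpos (by positivity) (by nlinarith) (by linarith)
    have h3 : ((3/4:ℝ)*a)^(-s-1) = (3/4:ℝ)^(-s-1) * a^(-s-1) :=
      Real.mul_rpow (by norm_num) (by positivity)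
    have h4 : a^(-s-1) = a^(-(s+1)) := by rw [show -(s+1) = -s-1 by ring]
    calc (a-δ)^(-s) - (a+δ)^(-s) ≤ 2*δ*s*(a-δ)^(-s-1) := h1
      _ ≤ 2*δ*s*((3/4:ℝ)^(-s-1) * a^(-s-1)) := by
          rw [← h3]; exact mul_le_mul_of_nonneg_left h2 (by nlinarith)
      _ = 2*s*(3/4:ℝ)^(-s-1) * a^(-(s+1)) * δ := by rw [← h4]; ring
  have heq : ∀ δ : ℝ, (∑' j : ℕ, ((((j:ℝ)+1-δ)^(-s) - ((j:ℝ)+1+δ)^(-s))/δ)) = Gs s δ / δ := by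
    intro δ
    rw [Gs, ← tsum_div_const]
  have hval : (∑' j : ℕ, 2*s*((j:ℝ)+1)^(-(s+1))) = 2*s*rzeta (s+1) := by
    rw [rzeta, ← tsum_mul_left]
  rw [← hval]
  exact key.congr heq

/-- For `n > m > 1` and a hard-core radius `σ ∈ (1, 1+η)`, if
`A* : (1,1+η) → (0,∞)` satisfies, with `δ*(σ) = σ/(2A*(σ)) ∈ (0,1/2)` and `δ*(σ) → 0`
as `σ → 1⁺`, the equation
`(A*(σ))^{m−n} = 2^{n−m}·[ζ(m+1,1−δ*) − ζ(m+1,δ*)]/[ζ(n+1,1−δ*) − ζ(n+1,δ*)]`,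
then `lim_{σ→1⁺} A*(σ)·(σ−1)^{1/(m+2)} = (1/2)·(2(m+1)ζ(m+2)/(n−m))^{1/(m+2)}`;
in particular `A*(σ)` diverges as `σ → 1⁺` with the non-universal exponent `1/(m+2)`. -/
theorem hardcore_Astar_asymptotics
    (n m η : ℝ) (hm : 1 < m) (hnm : m < n) (hη : 0 < η)
    (Astar : ℝ → ℝ)
    (hpos : ∀ σ ∈ Set.Ioo (1 : ℝ) (1 + η), 0 < Astar σ)
    (hδmem : ∀ σ ∈ Set.Ioo (1 : ℝ) (1 + η),
      σ / (2 * Astar σ) ∈ Set.Ioo (0 : ℝ) (1 / 2))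
    (hδ0 : Tendsto (fun σ : ℝ => σ / (2 * Astar σ))
      (nhdsWithin 1 (Set.Ioi 1)) (nhds 0))
    (heq : ∀ σ ∈ Set.Ioo (1 : ℝ) (1 + η),
      (Astar σ) ^ (m - n) = 2 ^ (n - m) *
        (hzeta (m + 1) (1 - σ / (2 * Astar σ)) - hzeta (m + 1) (σ / (2 * Astar σ))) /
        (hzeta (n + 1) (1 - σ / (2 * Astar σ)) - hzeta (n + 1) (σ / (2 * Astar σ)))) :
    Tendsto (fun σ : ℝ => Astar σ * (σ - 1) ^ (1 / (m + 2)))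
      (nhdsWithin 1 (Set.Ioi 1))
      (nhds ((1 / 2) * (2 * (m + 1) * rzeta (m + 2) / (n - m)) ^ (1 / (m + 2)))) ∧
    Tendsto Astar (nhdsWithin 1 (Set.Ioi 1)) atTop := by
  set l := nhdsWithin (1:ℝ) (Set.Ioi 1) with hl
  have hmem : ∀ᶠ σ in l, σ ∈ Set.Ioo (1:ℝ) (1+η) :=
    Ioo_mem_nhdsGT_of_mem ⟨le_refl 1, by linarith⟩
  have hδpos : ∀ᶠ σ in l, 0 < σ / (2 * Astar σ) := hmem.mono fun σ hσ => (hδmem σ hσ).1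
  have hδhalf : ∀ᶠ σ in l, σ / (2 * Astar σ) < 1/2 := hmem.mono fun σ hσ => (hδmem σ hσ).2
  have hσ1 : ∀ᶠ σ in l, 1 < σ := hmem.mono fun σ hσ => hσ.1
  have hδ0' : Tendsto (fun σ : ℝ => σ / (2 * Astar σ)) l (𝓝[>] 0) :=
    tendsto_nhdsWithin_iff.mpr ⟨hδ0, hδpos⟩
  have hAeq : ∀ᶠ σ in l, Astar σ = σ / (2 * (σ / (2 * Astar σ))) := by
    filter_upwards [hmem, hσ1] with σ hσ h1
    have hA := hpos σ hσ
    have hσ0 : σ ≠ 0 := by linarith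
    field_simp
  -- the key identity
  have hkey : ∀ᶠ σ in l, (1 - σ^(m-n)) * (σ / (2 * Astar σ))^(-(m+1))
      = Gs (m+1) (σ / (2 * Astar σ))
        - σ^(m-n) * (σ / (2 * Astar σ))^(n-m) * Gs (n+1) (σ / (2 * Astar σ)) := by
    filter_upwards [hmem, hσ1, hδpos, hδhalf, hAeq] with σ hσm hσ hδp hδh hA
    set δ := σ / (2 * Astar σ) with hδdef
    have hσ0 : (0:ℝ) < σ := by linarith
    have hFn : hzeta (n+1) (1 - δ) - hzeta (n+1) δ < 0 :=
      sub_neg.mpr (hz_lt (by linarith) hδp hδh)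
    have hFn' : hzeta (n+1) (1 - δ) - hzeta (n+1) δ ≠ 0 := ne_of_lt hFn
    have h1 := heq σ hσm
    rw [← hδdef] at h1
    have h2ne : ((2:ℝ)^(n-m)) ≠ 0 := (Real.rpow_pos_of_pos two_pos _).ne'
    have hApow : (Astar σ)^(m-n) = σ^(m-n) * ((2:ℝ)^(n-m) * δ^(n-m)) := by
      rw [hA]
      rw [Real.div_rpow hσ0.le (by positivity)]
      rw [Real.mul_rpow (by norm_num) hδp.le]
      rw [show (n-m) = -(m-n) by ring, Real.rpow_neg (by norm_num), Real.rpow_neg hδp.le]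
      field_simp
    rw [hApow, eq_div_iff hFn'] at h1
    have h3 : σ^(m-n) * δ^(n-m) * (hzeta (n+1) (1 - δ) - hzeta (n+1) δ)
        = hzeta (m+1) (1 - δ) - hzeta (m+1) δ := by
      apply mul_left_cancel₀ h2ne
      linear_combination h1
    rw [hz_sub (show (1:ℝ) < m+1 by linarith) hδp hδh,
        hz_sub (show (1:ℝ) < n+1 by linarith) hδp hδh] at h3
    have hδmul : δ^(n-m) * δ^(-(n+1)) = δ^(-(m+1)) := by
      rw [← Real.rpow_add hδp]; congr 1; ring
    linear_combination h3 + σ^(m-n) * hδmul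
  -- limits
  have h_m : Tendsto (fun σ : ℝ => Gs (m+1) (σ / (2 * Astar σ)) / (σ / (2 * Astar σ)))
      l (𝓝 (2*(m+1)*rzeta (m+2))) := by
    have h := (G_asymp (show (1:ℝ) < m+1 by linarith)).comp hδ0'
    rw [show m+1+1 = m+2 by ring] at h
    exact h
  have h_n : Tendsto (fun σ : ℝ => Gs (n+1) (σ / (2 * Astar σ)) / (σ / (2 * Astar σ)))
      l (𝓝 (2*(n+1)*rzeta (n+2))) := by
    have h := (G_asymp (show (1:ℝ) < n+1 by nlinarith)).comp hδ0'
    rw [show n+1+1 = n+2 by ring] at h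
    exact h
  have hid : Tendsto (fun σ : ℝ => σ) l (𝓝 1) := tendsto_id.mono_right nhdsWithin_le_nhds
  have h_pow : Tendsto (fun σ : ℝ => σ^(m-n)) l (𝓝 1) := by
    have h := hid.rpow_const (p := m-n) (Or.inl one_ne_zero)
    rwa [Real.one_rpow] at h
  have h_ratio : Tendsto (fun σ : ℝ => (σ-1)/(1-σ^(m-n))) l (𝓝 (n-m)⁻¹) := by
    have h0 : HasDerivAt (fun σ : ℝ => σ^(m-n)) (m-n) 1 := by
      simpa using Real.hasDerivAt_rpow_const (x := (1:ℝ)) (p := m-n) (Or.inl one_ne_zero)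
    have hder : HasDerivAt (fun σ : ℝ => 1 - σ^(m-n)) (n-m) 1 := by
      simpa [show -(m-n) = n-m by ring] using h0.const_sub 1
    rw [hasDerivAt_iff_tendsto_slope] at hder
    have h' := hder.mono_left (nhdsWithin_mono 1 (fun x hx => ne_of_gt hx))
    have hslope : Tendsto (fun σ : ℝ => (1 - σ^(m-n))/(σ-1)) l (𝓝 (n-m)) := by
      refine h'.congr fun σ => ?_
      simp [slope_def_field, Real.one_rpow]
    have hinv := hslope.inv₀ (show n - m ≠ 0 by intro h; linarith [sub_eq_zero.mp h])
    refine hinv.congr fun σ => ?_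
    rw [inv_div]
  have hδn : Tendsto (fun σ : ℝ => (σ / (2 * Astar σ))^(n-m)) l (𝓝 0) := by
    have h := hδ0.rpow_const (Or.inr (le_of_lt (sub_pos.mpr hnm)))
    rwa [Real.zero_rpow (ne_of_gt (sub_pos.mpr hnm))] at h
  have h_small : Tendsto (fun σ : ℝ => σ^(m-n) * (σ / (2 * Astar σ))^(n-m)
      * (Gs (n+1) (σ / (2 * Astar σ)) / (σ / (2 * Astar σ)))) l (𝓝 0) := by
    simpa using (h_pow.mul hδn).mul h_n
  have hR : Tendsto (fun σ : ℝ => Gs (m+1) (σ / (2 * Astar σ)) / (σ / (2 * Astar σ))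
      - σ^(m-n) * (σ / (2 * Astar σ))^(n-m)
        * (Gs (n+1) (σ / (2 * Astar σ)) / (σ / (2 * Astar σ))))
      l (𝓝 (2*(m+1)*rzeta (m+2))) := by
    simpa using h_m.sub h_small
  have hlim2 : Tendsto (fun σ : ℝ => (σ-1)/((σ / (2 * Astar σ))^(m+2))) l
      (𝓝 ((n-m)⁻¹ * (2*(m+1)*rzeta (m+2)))) := by
    refine (h_ratio.mul hR).congr' ?_
    filter_upwards [hkey, hσ1, hδpos] with σ hk hσ hδp
    set δ := σ / (2 * Astar σ) with hδdef
    have hσ1' : (0:ℝ) < σ - 1 := by linarith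
    have hlt1 : σ^(m-n) < 1 :=
      Real.rpow_lt_one_of_one_lt_of_neg hσ (by linarith)
    have hne1 : 1 - σ^(m-n) ≠ 0 := by intro h; nlinarith [sub_eq_zero.mp h]
    have hRcomb : Gs (m+1) δ / δ - σ^(m-n) * δ^(n-m) * (Gs (n+1) δ / δ)
        = (1 - σ^(m-n)) * δ^(-(m+1)) / δ := by
      rw [hk]; ring
    rw [hRcomb]
    rw [Real.rpow_neg hδp.le (m+1)]
    have hsplit : δ^(m+2) = δ^(m+1) * δ := by
      rw [show m+2 = (m+1)+1 by ring, Real.rpow_add hδp, Real.rpow_one]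
    rw [hsplit]
    have hδm1 : δ^(m+1) ≠ 0 := (Real.rpow_pos_of_pos hδp _).ne'
    field_simp
  -- first conclusion
  have hhalf : Tendsto (fun σ : ℝ => σ/2) l (𝓝 (1/2)) := by
    simpa using hid.div_const 2
  have hp1 : (0:ℝ) ≤ 1/(m+2) := le_of_lt (by positivity)
  have hf1 : Tendsto (fun σ : ℝ => (σ/2) * ((σ-1)/((σ / (2 * Astar σ))^(m+2)))^(1/(m+2)))
      l (𝓝 ((1/2) * ((n-m)⁻¹ * (2*(m+1)*rzeta (m+2)))^(1/(m+2)))) :=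
    hhalf.mul (hlim2.rpow_const (Or.inr hp1))
  have hconst : (n-m)⁻¹ * (2*(m+1)*rzeta (m+2)) = 2*(m+1)*rzeta (m+2)/(n-m) := by
    ring
  rw [hconst] at hf1
  constructor
  · refine hf1.congr' ?_
    filter_upwards [hσ1, hδpos, hAeq] with σ hσ hδp hA
    set δ := σ / (2 * Astar σ) with hδdef
    have hσ1' : (0:ℝ) < σ - 1 := by linarith
    have hm2 : m + 2 ≠ 0 := by linarith
    rw [Real.div_rpow hσ1'.le (Real.rpow_nonneg hδp.le _)]
    rw [← Real.rpow_mul hδp.le, mul_one_div_cancel hm2, Real.rpow_one]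
    rw [hA]
    have hδne : δ ≠ 0 := hδp.ne'
    field_simp
  · have h2δ : Tendsto (fun σ : ℝ => 2 * (σ / (2 * Astar σ))) l (𝓝[>] 0) := by
      rw [tendsto_nhdsWithin_iff]
      constructor
      · simpa using hδ0.const_mul 2
      · filter_upwards [hδpos] with σ h; exact mul_pos two_pos h
    have hinv : Tendsto (fun σ : ℝ => (2 * (σ / (2 * Astar σ)))⁻¹) l atTop :=
      h2δ.inv_tendsto_nhdsGT_zero
    refine tendsto_atTop_mono' l ?_ hinv
    filter_upwards [hσ1, hδpos, hAeq] with σ h1 h2 h3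
    have hpos' : (0:ℝ) < (2 * (σ / (2 * Astar σ)))⁻¹ := inv_pos.mpr (by linarith)
    calc (2 * (σ / (2 * Astar σ)))⁻¹ = 1 * (2 * (σ / (2 * Astar σ)))⁻¹ := (one_mul _).symm
      _ ≤ σ * (2 * (σ / (2 * Astar σ)))⁻¹ := by nlinarith
      _ = σ / (2 * (σ / (2 * Astar σ))) := (div_eq_mul_inv _ _).symm
      _ = Astar σ := h3.symm
end
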